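/- For every n ≥ 3 with n ≠ 5, the cycle C_n has a star edge coloring with 3 colors; consequently χ'_s(C_n) = 3 for n ≡ 0 (mod 3) and χ'_s(C_n) ≤ 4 in general, with χ'_s(C_5) = 4. -/

import Mathlib

open SimpleGraph Finset

/-- A star edge coloring: a proper edge coloring with no bi-colored path or
cycle on four edges. -/
def IsStarEdgeColoring {V : Type*} (G : SimpleGraph V) (c : Sym2 V → ℕ) : Prop :=
  (∀ ⦃u v w : V⦄, G.Adj u v → G.Adj u w → v ≠ w → c s(u, v) ≠ c s(u, w)) ∧
  (∀ v₀ v₁ v₂ v₃ v₄ : V, G.Adj v₀ v₁ → G.Adj v₁ v₂ → G.Adj v₂ v₃ → G.Adj v₃ v₄ →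
    v₀ ≠ v₁ → v₀ ≠ v₂ → v₀ ≠ v₃ → v₁ ≠ v₂ → v₁ ≠ v₃ → v₂ ≠ v₃ →
    v₄ ≠ v₁ → v₄ ≠ v₂ → v₄ ≠ v₃ →
    ¬(c s(v₀, v₁) = c s(v₂, v₃) ∧ c s(v₁, v₂) = c s(v₃, v₄)))

/-- `G` has a star edge coloring using colors `0, …, k-1`. -/
def StarColorable {V : Type*} (G : SimpleGraph V) (k : ℕ) : Prop :=
  ∃ c : Sym2 V → ℕ, (∀ ⦃u v : V⦄, G.Adj u v → c s(u, v) < k) ∧ IsStarEdgeColoring G c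

/-- The star chromatic index of `G`. -/
noncomputable def starChromaticIndex {V : Type*} (G : SimpleGraph V) : ℕ :=
  sInf {k | StarColorable G k}

/-- A cactus: every edge belongs to at most one cycle, i.e. any two cycles
through a common edge have the same edge set. -/
def IsCactus {V : Type*} (G : SimpleGraph V) : Prop :=
  ∀ ⦃u w : V⦄ (p : G.Walk u u) (q : G.Walk w w), p.IsCycle → q.IsCycle →
    ∀ e : Sym2 V, e ∈ p.edges → e ∈ q.edges →
      {e' | e' ∈ p.edges} = {e' | e' ∈ q.edges}

/-- For every `n ≥ 3` with `n ≠ 5`, `C_n` has a star edge coloring with 3 colors;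
consequently `χ'ₛ(C_n) = 3` when `3 ∣ n`, `χ'ₛ(C_n) ≤ 4` in general, and `χ'ₛ(C_5) = 4`. -/
def GoodSeq (n k : ℕ) (h : ℕ → ℕ) : Prop :=
  ∀ i < n, h i < k ∧ h i ≠ h ((i+1) % n) ∧
    ¬(h i = h ((i+2) % n) ∧ h ((i+1) % n) = h ((i+3) % n))

lemma add_mod_cases (n i k : ℕ) (hi : i < n) (hk : k ≤ n) :
    ((i + k) % n = i + k ∧ i + k < n) ∨ ((i + k) % n = i + k - n ∧ n ≤ i + k) := by
  rcases Nat.lt_or_ge (i + k) n with h | h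
  · exact Or.inl ⟨Nat.mod_eq_of_lt h, h⟩
  · right
    refine ⟨?_, h⟩
    rw [Nat.mod_eq_sub_mod h, Nat.mod_eq_of_lt (by omega)]

lemma val_succ {n : ℕ} [NeZero n] (u : Fin n) : (u+1).val = (u.val + 1) % n := by
  rw [Fin.add_def]
  show (u.val + (1 : Fin n).val) % n = _
  rw [Fin.val_one', Nat.add_mod_mod]

lemma not_both {m : ℕ} (a b : Fin (m+3)) : ¬(b = a + 1 ∧ a = b + 1) := by
  rintro ⟨rfl, h2⟩
  have h3 : a.val = (a.val + 2) % (m+3) := by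
    conv_lhs => rw [h2]
    rw [val_succ, val_succ, Nat.mod_add_mod]
  have h4 := a.isLt
  rcases add_mod_cases (m+3) a.val 2 h4 (by omega) with ⟨e, e'⟩ | ⟨e, e'⟩ <;> omega

lemma adj_succ {m : ℕ} (u : Fin (m+3)) : (cycleGraph (m+3)).Adj u (u+1) := by
  rw [cycleGraph_adj]
  right
  exact add_sub_cancel_left u 1

lemma adj_cases {m : ℕ} {u v : Fin (m+3)} (h : (cycleGraph (m+3)).Adj u v) :
    v = u + 1 ∨ u = v + 1 := by
  rw [cycleGraph_adj] at h
  rcases h with h | h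
  · right; rw [sub_eq_iff_eq_add] at h; exact h.trans (add_comm 1 v)
  · left; rw [sub_eq_iff_eq_add] at h; exact h.trans (add_comm 1 u)

def edgeCol (m : ℕ) (h : ℕ → ℕ) : Sym2 (Fin (m+3)) → ℕ :=
  Sym2.lift ⟨fun a b => if b = a + 1 then h a.val else if a = b + 1 then h b.val else 0, by
    intro a b
    dsimp only
    by_cases h1 : b = a + 1 <;> by_cases h2 : a = b + 1
    · exact absurd ⟨h1, h2⟩ (not_both a b)
    · rw [if_pos h1, if_neg h2, if_pos h1]
    · rw [if_neg h1, if_pos h2, if_pos h2]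
    · rw [if_neg h1, if_neg h2, if_neg h2, if_neg h1]⟩

lemma edgeCol_fwd {m : ℕ} (h : ℕ → ℕ) (u : Fin (m+3)) :
    edgeCol m h s(u, u+1) = h u.val := by
  show Sym2.lift _ _ = _
  rw [Sym2.lift_mk]
  exact if_pos rfl

lemma edgeCol_bwd {m : ℕ} (h : ℕ → ℕ) (u : Fin (m+3)) :
    edgeCol m h s(u+1, u) = h u.val := by
  rw [Sym2.eq_swap]; exact edgeCol_fwd h u

lemma seq_to_colorable (n k : ℕ) (hn : 3 ≤ n) (h : ℕ → ℕ) (hg : GoodSeq n k h) :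
    StarColorable (SimpleGraph.cycleGraph n) k := by
  obtain ⟨m, rfl⟩ : ∃ m, n = m + 3 := ⟨n - 3, by omega⟩
  refine ⟨edgeCol m h, ?_, ?_, ?_⟩
  · intro u v huv
    rcases adj_cases huv with rfl | rfl
    · rw [edgeCol_fwd]
      exact (hg u.val u.isLt).1
    · rw [edgeCol_bwd]
      exact (hg v.val v.isLt).1
  · intro u v w huv huw hvw
    rcases adj_cases huv with h1 | h1 <;> rcases adj_cases huw with h2 | h2
    · exact absurd (h1.trans h2.symm) hvw
    · subst h1; subst h2
      rw [edgeCol_fwd, edgeCol_bwd]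
      intro e
      apply (hg w.val w.isLt).2.1
      rw [← val_succ]
      exact e.symm
    · subst h1; subst h2
      rw [edgeCol_bwd, edgeCol_fwd]
      intro e
      apply (hg v.val v.isLt).2.1
      rw [← val_succ]
      exact e
    · rw [h1] at h2
      exact absurd (add_right_cancel h2) hvw
  · intro v0 v1 v2 v3 v4 a01 a12 a23 a34 d01 d02 d03 d12 d13 d23 d41 d42 d43
    rcases adj_cases a01 with h1 | h1 <;> rcases adj_cases a12 with h2 | h2 <;>
      rcases adj_cases a23 with h3 | h3 <;> rcases adj_cases a34 with h4 | h4
    · -- ffff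
      subst h4; subst h3; subst h2; subst h1
      rw [edgeCol_fwd, edgeCol_fwd, edgeCol_fwd, edgeCol_fwd]
      have e1 : (v0+1).val = (v0.val + 1) % (m+3) := val_succ v0
      have e2 : (v0+1+1).val = (v0.val + 2) % (m+3) := by
        rw [val_succ, e1, Nat.mod_add_mod]
      have e3 : (v0+1+1+1).val = (v0.val + 3) % (m+3) := by
        rw [val_succ, e2, Nat.mod_add_mod]
      rw [e1, e2, e3]
      exact (hg v0.val v0.isLt).2.2
    · exact absurd (add_right_cancel (h3.symm.trans h4)) d42.symm
    · exact absurd (h3.trans h4.symm) d42.symm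
    · exact absurd (add_right_cancel (h2.symm.trans h3)) d13
    · exact absurd (add_right_cancel (h1.symm.trans h2)) d02
    · exact absurd (add_right_cancel (h1.symm.trans h2)) d02
    · exact absurd (add_right_cancel (h1.symm.trans h2)) d02
    · exact absurd (add_right_cancel (h1.symm.trans h2)) d02
    · exact absurd (h1.trans h2.symm) d02
    · exact absurd (h1.trans h2.symm) d02
    · exact absurd (h1.trans h2.symm) d02
    · exact absurd (h1.trans h2.symm) d02
    · exact absurd (h2.trans h3.symm) d13
    · exact absurd (h2.trans h3.symm) d13
    · exact absurd (h3.trans h4.symm) d42.symm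
    · -- bbbb
      subst h1; subst h2; subst h3; subst h4
      rw [edgeCol_bwd, edgeCol_bwd, edgeCol_bwd, edgeCol_bwd]
      have e1 : (v4+1).val = (v4.val + 1) % (m+3) := val_succ v4
      have e2 : (v4+1+1).val = (v4.val + 2) % (m+3) := by
        rw [val_succ, e1, Nat.mod_add_mod]
      have e3 : (v4+1+1+1).val = (v4.val + 3) % (m+3) := by
        rw [val_succ, e2, Nat.mod_add_mod]
      rw [e1, e2, e3]
      rintro ⟨p, q⟩
      exact (hg v4.val v4.isLt).2.2 ⟨q.symm, p.symm⟩

lemma mod_ne (n x y : ℕ) (h1 : x < y) (h2 : y - x < n) : x % n ≠ y % n := by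
  intro e
  have h3 := (Nat.modEq_iff_dvd' (le_of_lt h1)).1 e
  have h4 := Nat.le_of_dvd (by omega) h3
  omega

lemma fin_ne_of_val_mod {N : ℕ} (x y : Fin N) (a b : ℕ) (ha : x.val = a % N)
    (hb : y.val = b % N) (h1 : a < b) (h2 : b - a < N) : x ≠ y := by
  intro e
  apply mod_ne N a b h1 h2
  rw [← ha, ← hb, e]

open Fin.NatCast in
lemma colorable_to_seq (n k : ℕ) (hn : 4 ≤ n) :
    StarColorable (SimpleGraph.cycleGraph n) k → ∃ h : ℕ → ℕ, GoodSeq n k h := by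
  obtain ⟨m, rfl⟩ : ∃ m, n = m + 4 := ⟨n - 4, by omega⟩
  rintro ⟨c, hlt, hp, hs⟩
  have E0 : ∀ u : Fin (m+4), u.val = u.val % (m+4) :=
    fun u => (Nat.mod_eq_of_lt u.isLt).symm
  have E1 : ∀ u : Fin (m+4), (u+1).val = (u.val + 1) % (m+4) := fun u => val_succ u
  have E2 : ∀ u : Fin (m+4), (u+1+1).val = (u.val + 2) % (m+4) := fun u => by
    rw [val_succ, E1, Nat.mod_add_mod]
  have E3 : ∀ u : Fin (m+4), (u+1+1+1).val = (u.val + 3) % (m+4) := fun u => by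
    rw [val_succ, E2, Nat.mod_add_mod]
  have E4 : ∀ u : Fin (m+4), (u+1+1+1+1).val = (u.val + 4) % (m+4) := fun u => by
    rw [val_succ, E3, Nat.mod_add_mod]
  have prop : ∀ u : Fin (m+4), c s(u, u+1) ≠ c s(u+1, u+1+1) := by
    intro u
    have hne : u ≠ u+1+1 :=
      fin_ne_of_val_mod u (u+1+1) u.val (u.val+2) (E0 u) (E2 u) (by omega) (by omega)
    have h1 := hp (adj_succ u).symm (adj_succ (u+1)) hne
    rwa [Sym2.eq_swap] at h1
  have star : ∀ u : Fin (m+4),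
      ¬(c s(u, u+1) = c s(u+1+1, u+1+1+1) ∧ c s(u+1, u+1+1) = c s(u+1+1+1, u+1+1+1+1)) := by
    intro u
    refine hs u (u+1) (u+1+1) (u+1+1+1) (u+1+1+1+1)
      (adj_succ u) (adj_succ (u+1)) (adj_succ (u+1+1)) (adj_succ (u+1+1+1))
      (fin_ne_of_val_mod _ _ u.val (u.val+1) (E0 u) (E1 u) (by omega) (by omega))
      (fin_ne_of_val_mod _ _ u.val (u.val+2) (E0 u) (E2 u) (by omega) (by omega))
      (fin_ne_of_val_mod _ _ u.val (u.val+3) (E0 u) (E3 u) (by omega) (by omega))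
      (fin_ne_of_val_mod _ _ (u.val+1) (u.val+2) (E1 u) (E2 u) (by omega) (by omega))
      (fin_ne_of_val_mod _ _ (u.val+1) (u.val+3) (E1 u) (E3 u) (by omega) (by omega))
      (fin_ne_of_val_mod _ _ (u.val+2) (u.val+3) (E2 u) (E3 u) (by omega) (by omega))
      (fin_ne_of_val_mod _ _ (u.val+1) (u.val+4) (E1 u) (E4 u) (by omega) (by omega)).symm
      (fin_ne_of_val_mod _ _ (u.val+2) (u.val+4) (E2 u) (E4 u) (by omega) (by omega)).symm
      (fin_ne_of_val_mod _ _ (u.val+3) (u.val+4) (E3 u) (E4 u) (by omega) (by omega)).symm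
  have vcast : ∀ j : ℕ, ((j : Fin (m+4))).val = j % (m+4) := fun j => Fin.val_natCast j (m+4)
  have ci : ∀ j : ℕ, ((((j+1) % (m+4) : ℕ)) : Fin (m+4)) = (j : Fin (m+4)) + 1 := by
    intro j
    apply Fin.ext
    rw [vcast, val_succ, vcast, Nat.mod_add_mod, Nat.mod_mod_of_dvd _ dvd_rfl]
  refine ⟨fun j => c s((j : Fin (m+4)), (j : Fin (m+4)) + 1), ?_⟩
  intro i hi
  have c1 : ((i+1 : ℕ) : Fin (m+4)) = (i : Fin (m+4)) + 1 := by push_cast; ring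
  have c2 : ((i+2 : ℕ) : Fin (m+4)) = (i : Fin (m+4)) + 1 + 1 := by
    apply Fin.ext; rw [vcast, val_succ, val_succ, vcast, Nat.mod_add_mod, Nat.add_assoc (i % (m+4)),
      Nat.mod_add_mod]
  have r1 : ((((i+1) % (m+4) : ℕ)) : Fin (m+4)) = (i : Fin (m+4)) + 1 := ci i
  have r2 : ((((i+2) % (m+4) : ℕ)) : Fin (m+4)) = (i : Fin (m+4)) + 1 + 1 := by
    rw [show i+2 = (i+1)+1 from by omega, ci (i+1), c1]
  have r3 : ((((i+3) % (m+4) : ℕ)) : Fin (m+4)) = (i : Fin (m+4)) + 1 + 1 + 1 := by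
    rw [show i+3 = (i+2)+1 from by omega, ci (i+2), c2]
  dsimp only
  rw [r1, r2, r3]
  exact ⟨hlt (adj_succ _), prop _, star _⟩

lemma star_mono {V : Type*} (G : SimpleGraph V) {k l : ℕ} (hkl : k ≤ l) :
    StarColorable G k → StarColorable G l := by
  rintro ⟨c, hc, hs⟩
  exact ⟨c, fun u v h => lt_of_lt_of_le (hc h) hkl, hs⟩

lemma not_two (n : ℕ) (hn : 3 ≤ n) : ¬ StarColorable (SimpleGraph.cycleGraph n) 2 := by
  intro hc
  rcases Nat.lt_or_ge n 4 with h4 | h4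
  · have hn3 : n = 3 := by omega
    subst hn3
    obtain ⟨c, hlt, hp, _⟩ := hc
    have a01 : (cycleGraph 3).Adj 0 1 := by decide
    have a02 : (cycleGraph 3).Adj 0 2 := by decide
    have a12 : (cycleGraph 3).Adj 1 2 := by decide
    have h1 := hp a01 a02 (by decide)
    have h2 := hp a01.symm a12 (by decide)
    have h3 := hp a02.symm a12.symm (by decide)
    rw [Sym2.eq_swap] at h2
    rw [Sym2.eq_swap] at h3
    rw [Sym2.eq_swap (a := (2 : Fin 3)) (b := (1 : Fin 3))] at h3
    have b1 := hlt a01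
    have b2 := hlt a02
    have b3 := hlt a12
    omega
  · obtain ⟨h, hg⟩ := colorable_to_seq n 2 h4 hc
    have g0 := hg 0 (by omega)
    have g1 := hg 1 (by omega)
    have g2 := hg 2 (by omega)
    have g3 := hg 3 (by omega)
    rw [Nat.mod_eq_of_lt (by omega : (0:ℕ)+1 < n), Nat.mod_eq_of_lt (by omega : (0:ℕ)+2 < n),
      Nat.mod_eq_of_lt (by omega : (0:ℕ)+3 < n)] at g0
    rw [Nat.mod_eq_of_lt (by omega : (1:ℕ)+1 < n)] at g1
    rw [Nat.mod_eq_of_lt (by omega : (2:ℕ)+1 < n)] at g2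
    norm_num at g0 g1 g2
    omega

set_option maxRecDepth 10000 in
lemma not_three_five : ¬ StarColorable (SimpleGraph.cycleGraph 5) 3 := by
  intro hc
  obtain ⟨h, hg⟩ := colorable_to_seq 5 3 (by norm_num) hc
  have key : ∀ g : Fin 5 → Fin 3,
      ¬ (∀ i : Fin 5, g i ≠ g (i+1) ∧ ¬(g i = g (i+2) ∧ g (i+1) = g (i+3))) := by decide
  have w1 : ∀ i : Fin 5, (i+1).val = (i.val+1) % 5 := by decide
  have w2 : ∀ i : Fin 5, (i+2).val = (i.val+2) % 5 := by decide
  have w3 : ∀ i : Fin 5, (i+3).val = (i.val+3) % 5 := by decide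
  apply key (fun i => ⟨h i.val, (hg i.val i.isLt).1⟩)
  intro i
  have hi := hg i.val i.isLt
  constructor
  · intro e
    apply hi.2.1
    have e' := congrArg Fin.val e
    simp only [] at e'
    rwa [w1 i] at e'
  · rintro ⟨e1, e2⟩
    apply hi.2.2
    have e1' := congrArg Fin.val e1
    have e2' := congrArg Fin.val e2
    simp only [] at e1' e2'
    rw [w2 i] at e1'
    rw [w1 i, w3 i] at e2'
    exact ⟨e1', e2'⟩

def suff (m a b c d e i : ℕ) : ℕ :=
  if i < m then i % 3 else if i = m then a else if i = m+1 then b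
  else if i = m+2 then c else if i = m+3 then d else e

lemma suff_val (m a b c d e i : ℕ) :
    (i < m ∧ suff m a b c d e i = i % 3) ∨ (i = m ∧ suff m a b c d e i = a) ∨
    (i = m+1 ∧ suff m a b c d e i = b) ∨ (i = m+2 ∧ suff m a b c d e i = c) ∨
    (i = m+3 ∧ suff m a b c d e i = d) ∨ (m+4 ≤ i ∧ suff m a b c d e i = e) := by
  unfold suff
  split_ifs <;> omega

lemma good0 (n : ℕ) (hn : 3 ≤ n) (h3 : n % 3 = 0) : GoodSeq n 3 (fun i => i % 3) := by
  intro i hi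
  have e1 := add_mod_cases n i 1 hi (by omega)
  have e2 := add_mod_cases n i 2 hi (by omega)
  have e3 := add_mod_cases n i 3 hi (by omega)
  dsimp only
  generalize (i+1) % n = j1 at e1 ⊢
  generalize (i+2) % n = j2 at e2 ⊢
  generalize (i+3) % n = j3 at e3 ⊢
  omega

set_option maxHeartbeats 2000000 in
lemma good1 (n : ℕ) (hn : 4 ≤ n) (h3 : n % 3 = 1) : GoodSeq n 3 (suff (n-4) 0 1 0 2 0) := by
  intro i hi
  have e1 := add_mod_cases n i 1 hi (by omega)
  have e2 := add_mod_cases n i 2 hi (by omega)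
  have e3 := add_mod_cases n i 3 hi (by omega)
  generalize hj1 : (i+1) % n = j1 at e1 ⊢
  generalize hj2 : (i+2) % n = j2 at e2 ⊢
  generalize hj3 : (i+3) % n = j3 at e3 ⊢
  clear hj1 hj2 hj3
  have E0 := suff_val (n-4) 0 1 0 2 0 i
  have E1 := suff_val (n-4) 0 1 0 2 0 j1
  have E2 := suff_val (n-4) 0 1 0 2 0 j2
  have E3 := suff_val (n-4) 0 1 0 2 0 j3
  generalize suff (n-4) 0 1 0 2 0 i = x0 at E0 ⊢
  generalize suff (n-4) 0 1 0 2 0 j1 = x1 at E1 ⊢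
  generalize suff (n-4) 0 1 0 2 0 j2 = x2 at E2 ⊢
  generalize suff (n-4) 0 1 0 2 0 j3 = x3 at E3 ⊢
  rcases e1 with ⟨e1, e1'⟩ | ⟨e1, e1'⟩ <;> rcases e2 with ⟨e2, e2'⟩ | ⟨e2, e2'⟩ <;>
    rcases e3 with ⟨e3, e3'⟩ | ⟨e3, e3'⟩ <;> subst e1 e2 e3 <;>
    rcases E0 with ⟨h0, rfl⟩ | ⟨h0, rfl⟩ | ⟨h0, rfl⟩ | ⟨h0, rfl⟩ | ⟨h0, rfl⟩ | ⟨h0, rfl⟩ <;>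
    omega

set_option maxHeartbeats 2000000 in
lemma good2 (n : ℕ) (hn : 8 ≤ n) (h3 : n % 3 = 2) : GoodSeq n 3 (suff (n-5) 0 1 0 2 1) := by
  intro i hi
  have e1 := add_mod_cases n i 1 hi (by omega)
  have e2 := add_mod_cases n i 2 hi (by omega)
  have e3 := add_mod_cases n i 3 hi (by omega)
  generalize hj1 : (i+1) % n = j1 at e1 ⊢
  generalize hj2 : (i+2) % n = j2 at e2 ⊢
  generalize hj3 : (i+3) % n = j3 at e3 ⊢
  clear hj1 hj2 hj3
  have E0 := suff_val (n-5) 0 1 0 2 1 i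
  have E1 := suff_val (n-5) 0 1 0 2 1 j1
  have E2 := suff_val (n-5) 0 1 0 2 1 j2
  have E3 := suff_val (n-5) 0 1 0 2 1 j3
  generalize suff (n-5) 0 1 0 2 1 i = x0 at E0 ⊢
  generalize suff (n-5) 0 1 0 2 1 j1 = x1 at E1 ⊢
  generalize suff (n-5) 0 1 0 2 1 j2 = x2 at E2 ⊢
  generalize suff (n-5) 0 1 0 2 1 j3 = x3 at E3 ⊢
  rcases e1 with ⟨e1, e1'⟩ | ⟨e1, e1'⟩ <;> rcases e2 with ⟨e2, e2'⟩ | ⟨e2, e2'⟩ <;>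
    rcases e3 with ⟨e3, e3'⟩ | ⟨e3, e3'⟩ <;> subst e1 e2 e3 <;>
    rcases E0 with ⟨h0, rfl⟩ | ⟨h0, rfl⟩ | ⟨h0, rfl⟩ | ⟨h0, rfl⟩ | ⟨h0, rfl⟩ | ⟨h0, rfl⟩ <;>
    omega

lemma good5 : GoodSeq 5 4 (suff 0 0 1 0 2 3) := by
  unfold GoodSeq suff
  decide

theorem starChromaticIndex_cycles :
    (∀ n : ℕ, 3 ≤ n → n ≠ 5 → StarColorable (SimpleGraph.cycleGraph n) 3) ∧
    (∀ n : ℕ, 3 ≤ n → n % 3 = 0 → starChromaticIndex (SimpleGraph.cycleGraph n) = 3) ∧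
    (∀ n : ℕ, 3 ≤ n → starChromaticIndex (SimpleGraph.cycleGraph n) ≤ 4) ∧
    starChromaticIndex (SimpleGraph.cycleGraph 5) = 4 := by
  have part1 : ∀ n : ℕ, 3 ≤ n → n ≠ 5 → StarColorable (SimpleGraph.cycleGraph n) 3 := by
    intro n hn h5
    rcases (show n % 3 = 0 ∨ n % 3 = 1 ∨ n % 3 = 2 by omega) with h | h | h
    · exact seq_to_colorable n 3 hn _ (good0 n hn h)
    · exact seq_to_colorable n 3 hn _ (good1 n (by omega) h)
    · exact seq_to_colorable n 3 hn _ (good2 n (by omega) h)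
  refine ⟨part1, ?_, ?_, ?_⟩
  · intro n hn h3
    unfold starChromaticIndex
    have mem3 := part1 n hn (by omega)
    have hne : {k | StarColorable (SimpleGraph.cycleGraph n) k}.Nonempty := ⟨3, mem3⟩
    refine le_antisymm (Nat.sInf_le mem3) ?_
    by_contra hcon
    push_neg at hcon
    have hmem := Nat.sInf_mem hne
    exact not_two n hn (star_mono _ (by omega) hmem)
  · intro n hn
    unfold starChromaticIndex
    rcases eq_or_ne n 5 with rfl | h5
    · exact Nat.sInf_le (seq_to_colorable 5 4 (by norm_num) _ good5)
    · exact Nat.sInf_le (star_mono _ (by omega) (part1 n hn h5))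
  · unfold starChromaticIndex
    have mem4 := seq_to_colorable 5 4 (by norm_num) _ good5
    have hne : {k | StarColorable (SimpleGraph.cycleGraph 5) k}.Nonempty := ⟨4, mem4⟩
    refine le_antisymm (Nat.sInf_le mem4) ?_
    by_contra hcon
    push_neg at hcon
    have hmem := Nat.sInf_mem hne
    exact not_three_five (star_mono _ (by omega) hmem)
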